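/- Suppose m₁,m₂,n₁,n₂,p₁,p₂,q₁,q₂ are nonnegative integers, r₁,r₂ are positive integers, s₁ = s₂ = 0, and the matrices A₁ and A₂ commute. If p₁ > m₁, then p₂ > m₂. -/
import Mathlib

/-- First claim of Remark A.3 of the paper: the case `s₁ = s₂ = 0` with `r₁, r₂` positive.
If the vertex matrices commute and `p₁ > m₁`, then `p₂ > m₂`. -/
theorem dumbbell_s_zero (m₁ m₂ n₁ n₂ p₁ p₂ q₁ q₂ r₁ r₂ : ℤ)
    (hm₁ : 0 ≤ m₁) (hm₂ : 0 ≤ m₂) (hn₁ : 0 ≤ n₁) (hn₂ : 0 ≤ n₂)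
    (hp₁ : 0 ≤ p₁) (hp₂ : 0 ≤ p₂) (hq₁ : 0 ≤ q₁) (hq₂ : 0 ≤ q₂)
    (hr₁ : 0 < r₁) (hr₂ : 0 < r₂)
    (hcomm : !![m₁, q₁, r₁; 0, n₁, 0; 0, 0, p₁] * !![m₂, q₂, r₂; 0, n₂, 0; 0, 0, p₂] =
      !![m₂, q₂, r₂; 0, n₂, 0; 0, 0, p₂] * !![m₁, q₁, r₁; 0, n₁, 0; 0, 0, p₁])
    (h₁ : p₁ > m₁) :
    p₂ > m₂ := by
  have h := congrFun (congrFun hcomm 0) 2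
  simp [Matrix.mul_apply, Fin.sum_univ_three] at h
  -- h : m₁*r₂ + r₁*p₂ = m₂*r₁ + r₂*p₁
  nlinarith [mul_pos hr₂ (sub_pos.mpr h₁)]
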